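/- Let k be a finite field of characteristic 2 and g ≥ −1. Define Q_g as the set of pairs (h, f) of polynomials over k with h nonzero, deg h ≤ g+1, deg f ≤ 2g+2. Define the relation (h, f) ∼_g (h, f + h l + l²) for polynomials l of degree at most g+1. Then ∼_g is an equivalence relation on Q_g, and each equivalence class has exactly q^{g+2}/2 elements, where q = |k|. -/
import Mathlib

open Polynomial

theorem artinSchreier_equiv_classes (k : Type*) [Field k] [Fintype k] [CharP k 2]
    (g : ℤ) (hg : -1 ≤ g) :
    Equivalence (fun p p' : {p : Polynomial k × Polynomial k //
        p.1 ≠ 0 ∧ p.1.natDegree ≤ (g + 1).toNat ∧ p.2.natDegree ≤ (2 * g + 2).toNat} =>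
      p.1.1 = p'.1.1 ∧ ∃ l : Polynomial k, l.natDegree ≤ (g + 1).toNat ∧
        p'.1.2 = p.1.2 + p.1.1 * l + l ^ 2) ∧
    ∀ p : {p : Polynomial k × Polynomial k //
        p.1 ≠ 0 ∧ p.1.natDegree ≤ (g + 1).toNat ∧ p.2.natDegree ≤ (2 * g + 2).toNat},
      Nat.card {p' : {p : Polynomial k × Polynomial k //
          p.1 ≠ 0 ∧ p.1.natDegree ≤ (g + 1).toNat ∧ p.2.natDegree ≤ (2 * g + 2).toNat} //
        p.1.1 = p'.1.1 ∧ ∃ l : Polynomial k, l.natDegree ≤ (g + 1).toNat ∧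
          p'.1.2 = p.1.2 + p.1.1 * l + l ^ 2} * 2
        = Fintype.card k ^ (g + 2).toNat := by
  classical
  have h2 : (2 : Polynomial k) = 0 := by
    have := CharP.cast_eq_zero (Polynomial k) 2
    exact_mod_cast this
  set n := (g + 1).toNat with hn
  have hm : (2 * g + 2).toNat = n + n := by omega
  have hg2 : (g + 2).toNat = n + 1 := by omega
  have memL : ∀ q : Polynomial k, q ∈ degreeLT k (n + 1) ↔ q.natDegree ≤ n := by
    intro q
    rw [mem_degreeLT]
    rcases eq_or_ne q 0 with rfl | hq
    · simpa using WithBot.bot_lt_coe (n + 1 : ℕ)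
    · rw [← natDegree_lt_iff_degree_lt hq, Nat.lt_succ_iff]
  constructor
  · constructor
    · intro p
      exact ⟨rfl, 0, by simp, by simp⟩
    · rintro p p' ⟨h1, l, hl, hf⟩
      refine ⟨h1.symm, l, hl, ?_⟩
      linear_combination -hf + l * h1 - (p.1.1 * l + l ^ 2) * h2
    · rintro p p' p'' ⟨h1, l1, hl1, hf1⟩ ⟨h1', l2, hl2, hf2⟩
      refine ⟨h1.trans h1', l1 + l2, le_trans (natDegree_add_le _ _) (max_le hl1 hl2), ?_⟩
      linear_combination hf2 + hf1 - l2 * h1 - l1 * l2 * h2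
  · rintro ⟨⟨h, f⟩, hh0, hdh, hdf⟩
    dsimp only at hh0 hdh hdf ⊢
    set D := {q : Polynomial k // ∃ l : Polynomial k, l.natDegree ≤ n ∧
      q = f + h * l + l ^ 2} with hD
    have degbound : ∀ l : Polynomial k, l.natDegree ≤ n →
        (f + h * l + l ^ 2).natDegree ≤ (2 * g + 2).toNat := by
      intro l hl
      rw [hm]
      refine le_trans (natDegree_add_le _ _) (max_le (le_trans (natDegree_add_le _ _)
        (max_le ?_ ?_)) ?_)
      · omega
      · exact le_trans (natDegree_mul_le) (by omega)
      · exact le_trans (natDegree_pow_le) (by omega)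
    have e1 : {p' : {p : Polynomial k × Polynomial k //
          p.1 ≠ 0 ∧ p.1.natDegree ≤ n ∧ p.2.natDegree ≤ (2 * g + 2).toNat} //
        h = p'.1.1 ∧ ∃ l : Polynomial k, l.natDegree ≤ n ∧
          p'.1.2 = f + h * l + l ^ 2} ≃ D := by
      refine ⟨fun c => ⟨c.1.1.2, c.2.2⟩, fun d => ⟨⟨⟨h, d.1⟩, hh0, hdh, ?_⟩, rfl, d.2⟩, ?_, ?_⟩
      · obtain ⟨l, hl, hq⟩ := d.2
        rw [hq]; exact degbound l hl
      · rintro ⟨⟨⟨h', f'⟩, _⟩, hc1, hc2⟩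
        dsimp only at hc1 ⊢
        subst hc1
        rfl
      · intro d; rfl
    have key : ∀ l l₀ : Polynomial k,
        f + h * l + l ^ 2 = f + h * l₀ + l₀ ^ 2 ↔ l = l₀ ∨ l = l₀ + h := by
      intro l l₀
      constructor
      · intro e
        have e2 : (l + l₀) * (l + l₀ + h) = 0 := by
          linear_combination e + (l * l₀ + l₀ ^ 2 + h * l₀) * h2
        rcases mul_eq_zero.1 e2 with e3 | e3
        · left; linear_combination e3 - l₀ * h2
        · right; linear_combination e3 - (l₀ + h) * h2
      · rintro (rfl | rfl)
        · rfl
        · linear_combination (h ^ 2 + l₀ * h) * h2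
    set L := degreeLT k (n + 1) with hL
    have : Finite L := Finite.of_equiv _ (degreeLTEquiv k (n + 1)).toEquiv.symm
    set φ : L → D := fun l => ⟨f + h * l.1 + l.1 ^ 2, l.1, (memL _).1 l.2, rfl⟩ with hφ
    have hsur : Function.Surjective φ := by
      rintro ⟨q, l₀, hl₀, hq⟩
      exact ⟨⟨l₀, (memL _).2 hl₀⟩, Subtype.ext hq.symm⟩
    have : Finite D := Finite.of_surjective φ hsur
    have fcard : ∀ d : D, Nat.card {x : L // φ x = d} = 2 := by
      rintro ⟨q, hqd⟩
      obtain ⟨l₀, hl₀, hq⟩ := hqd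
      have ha' : (l₀ : Polynomial k) ∈ degreeLT k (n + 1) := (memL _).2 hl₀
      have hb' : (l₀ + h : Polynomial k) ∈ degreeLT k (n + 1) :=
        (memL _).2 (le_trans (natDegree_add_le _ _) (max_le hl₀ hdh))
      set a : L := ⟨l₀, ha'⟩ with hadef
      set b : L := ⟨l₀ + h, hb'⟩ with hbdef
      have ha : φ a = ⟨q, l₀, hl₀, hq⟩ := Subtype.ext hq.symm
      have hb : φ b = ⟨q, l₀, hl₀, hq⟩ := by
        refine Subtype.ext ?_
        show f + h * (l₀ + h) + (l₀ + h) ^ 2 = q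
        rw [hq]
        exact (key _ _).2 (Or.inr rfl)
      have hab : a ≠ b := by
        intro hcon
        have := congrArg Subtype.val hcon
        simp only [hadef, hbdef, left_eq_add] at this
        exact hh0 this
      rw [Nat.card_eq_two_iff]
      refine ⟨⟨a, ha⟩, ⟨b, hb⟩, fun hcon => hab (congrArg Subtype.val hcon), ?_⟩
      ext ⟨x, hx⟩
      simp only [Set.mem_insert_iff, Set.mem_singleton_iff, Set.mem_univ, iff_true]
      have hx' : f + h * (x : Polynomial k) + (x : Polynomial k) ^ 2
          = f + h * l₀ + l₀ ^ 2 := by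
        have := congrArg Subtype.val hx
        simp only [hφ] at this
        rw [this, hq]
      rcases (key _ _).1 hx' with e | e
      · exact Or.inl (Subtype.ext (Subtype.ext e))
      · exact Or.inr (Subtype.ext (Subtype.ext e))
    have fequiv : ∀ d : D, Nonempty ({x : L // φ x = d} ≃ Bool) := by
      intro d
      rw [← Finite.card_eq, fcard d, Nat.card_eq_fintype_card, Fintype.card_bool]
    have cardL : Nat.card L = Fintype.card k ^ (n + 1) := by
      rw [Nat.card_congr (degreeLTEquiv k (n + 1)).toEquiv, Nat.card_eq_fintype_card,
        Fintype.card_fun]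
      simp
    have cardBool : Nat.card Bool = 2 := by
      rw [Nat.card_eq_fintype_card, Fintype.card_bool]
    have main : Nat.card D * 2 = Fintype.card k ^ (n + 1) := by
      rw [← cardL,
        Nat.card_congr (Equiv.sigmaFiberEquiv φ).symm,
        Nat.card_congr (Equiv.sigmaCongrRight fun d => (fequiv d).some),
        Nat.card_congr (Equiv.sigmaEquivProd D Bool), Nat.card_prod, cardBool]
    rw [Nat.card_congr e1, hg2]
    exact main
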